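/- arXiv:2605.20005 — 4 statements merged into one kernel-verified Lean document; each statement's English description precedes it below -/
import Mathlib

section
/- Let E be a finite-dimensional real inner product space and K ≥ 1. Let z : E → EuclideanSpace ℝ (Fin K) be differentiable at θ with operator norm ‖Dz(θ)‖ ≤ M, let q be a probability vector on Fin K, and define the training loss ℓ(ψ) = CE(q‖softmax(z(ψ))). Let f : E → ℝ be twice continuously differentiable with ‖∇f(ψ)‖ ≤ G and ‖∇²f(ψ)‖ ≤ H for all ψ ∈ E. Then for every η ≥ 0, setting θ' = θ − η·∇ℓ(θ), one has |f(θ') − f(θ)| ≤ √2·η·G·M·√(ℓ(θ)) + η²·H·M²·ℓ(θ). -/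
/-- `softmax(z)_i = exp(z_i) / ∑_j exp(z_j)`. -/
noncomputable def softmax {K : ℕ} (z : EuclideanSpace ℝ (Fin K)) : Fin K → ℝ :=
  fun i => Real.exp (z i) / ∑ j, Real.exp (z j)

/-- Cross-entropy `CE(q‖p) = −∑_i q_i·log p_i`. -/
noncomputable def crossEntropy {K : ℕ} (q p : Fin K → ℝ) : ℝ :=
  -∑ i, q i * Real.log (p i)

open Set


lemma aux_log_ineq {x y : ℝ} (hx0 : 0 ≤ x) (hx1 : x ≤ 1) (hy0 : 0 < y) (hy1 : y ≤ 1) :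
    x - y + (x - y) ^ 2 / 2 ≤ -(x * Real.log y) := by
  rcases eq_or_lt_of_le hx0 with h0 | h0
  · rw [← h0]
    nlinarith
  · set g : ℝ → ℝ := fun t => x * Real.log x - x * Real.log t - x + t - (x - t) ^ 2 / 2 with hg
    have hderiv : ∀ t : ℝ, 0 < t → HasDerivAt g (-(x / t) + 1 + x - t) t := by
      intro t ht
      have h1 : HasDerivAt (fun t : ℝ => x * Real.log t) (x * t⁻¹) t :=
        (Real.hasDerivAt_log ht.ne').const_mul x
      have h2 : HasDerivAt (fun t : ℝ => (x - t) ^ 2 / 2) ((2 * (x - t) ^ 1 * (0 - 1)) / 2) t := by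
        have : HasDerivAt (fun t : ℝ => (x - t) ^ 2) (2 * (x - t) ^ 1 * (0 - 1)) t :=
          ((hasDerivAt_const t x).sub (hasDerivAt_id t)).pow 2
        exact this.div_const 2
      have h4 := ((((hasDerivAt_const t (x * Real.log x)).sub h1).sub
        (hasDerivAt_const t x)).add (hasDerivAt_id t)).sub h2
      refine HasDerivAt.congr_deriv h4 ?_
      ring
    have hgx : g x = 0 := by simp [hg]
    have hsign : ∀ t : ℝ, 0 < t → -(x / t) + 1 + x - t = (t - x) * (1 - t) / t := by
      intro t ht; field_simp; ring
    have key : 0 ≤ g y := by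
      rcases le_total x y with hxy | hxy
      · have hmono : MonotoneOn g (Icc x 1) := by
          apply monotoneOn_of_deriv_nonneg (convex_Icc x 1)
          · intro t ht
            exact (hderiv t (lt_of_lt_of_le h0 ht.1)).differentiableAt.continuousAt.continuousWithinAt
          · intro t ht
            rw [interior_Icc] at ht
            exact ((hderiv t (lt_trans h0 ht.1)).differentiableAt).differentiableWithinAt
          · intro t ht
            rw [interior_Icc] at ht
            have ht0 : 0 < t := lt_trans h0 ht.1
            rw [(hderiv t ht0).deriv, hsign t ht0]
            apply div_nonneg _ ht0.le
            nlinarith [ht.1.le, ht.2.le]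
        have := hmono ⟨le_refl x, hx1⟩ ⟨hxy, hy1⟩ hxy
        rw [hgx] at this; exact this
      · have hanti : AntitoneOn g (Icc y x) := by
          apply antitoneOn_of_deriv_nonpos (convex_Icc y x)
          · intro t ht
            exact (hderiv t (lt_of_lt_of_le hy0 ht.1)).differentiableAt.continuousAt.continuousWithinAt
          · intro t ht
            rw [interior_Icc] at ht
            exact ((hderiv t (lt_trans hy0 ht.1)).differentiableAt).differentiableWithinAt
          · intro t ht
            rw [interior_Icc] at ht
            have ht0 : 0 < t := lt_trans hy0 ht.1
            rw [(hderiv t ht0).deriv, hsign t ht0]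
            apply div_nonpos_of_nonpos_of_nonneg _ ht0.le
            nlinarith [ht.2, hx1]
        have := hanti ⟨le_refl y, hxy⟩ ⟨hxy, le_refl x⟩ hxy
        rw [hgx] at this; exact this
    have hlogx : x * Real.log x ≤ 0 :=
      mul_nonpos_of_nonneg_of_nonpos hx0 (Real.log_nonpos hx0 hx1)
    simp only [hg] at key
    nlinarith [key]

lemma aux_pinsker {K : ℕ} (hK : 1 ≤ K) (z : EuclideanSpace ℝ (Fin K))
    (q : Fin K → ℝ) (hq0 : ∀ i, 0 ≤ q i) (hq1 : ∑ i, q i = 1) :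
    ∑ i, (q i - softmax z i) ^ 2 ≤ 2 * crossEntropy q (softmax z) := by
  have hne : Nonempty (Fin K) := ⟨⟨0, hK⟩⟩
  have hS : 0 < ∑ j, Real.exp (z j) :=
    Finset.sum_pos (fun j _ => Real.exp_pos _) Finset.univ_nonempty
  have hp0 : ∀ i, 0 < softmax z i := fun i => div_pos (Real.exp_pos _) hS
  have hp1 : ∀ i, softmax z i ≤ 1 := by
    intro i
    rw [softmax, div_le_one hS]
    exact Finset.single_le_sum (fun j _ => (Real.exp_pos (z j)).le) (Finset.mem_univ i)
  have hpsum : ∑ i, softmax z i = 1 := by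
    simp only [softmax]
    rw [← Finset.sum_div, div_self hS.ne']
  have hq1' : ∀ i, q i ≤ 1 := by
    intro i
    rw [← hq1]
    exact Finset.single_le_sum (fun j _ => hq0 j) (Finset.mem_univ i)
  have hterm : ∀ i ∈ Finset.univ, q i - softmax z i + (q i - softmax z i) ^ 2 / 2 ≤
      -(q i * Real.log (softmax z i)) :=
    fun i _ => aux_log_ineq (hq0 i) (hq1' i) (hp0 i) (hp1 i)
  have hsum := Finset.sum_le_sum hterm
  simp only [Finset.sum_add_distrib, Finset.sum_sub_distrib, Finset.sum_neg_distrib, hq1, hpsum,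
    ← Finset.sum_div] at hsum
  rw [crossEntropy]
  linarith


lemma aux_taylor {E : Type*} [NormedAddCommGroup E] [InnerProductSpace ℝ E]
    [FiniteDimensional ℝ E]
    (f : E → ℝ) (G H : ℝ) (hf : ContDiff ℝ 2 f)
    (hfgrad : ∀ ψ : E, ‖gradient f ψ‖ ≤ G)
    (hfhess : ∀ ψ : E, ‖fderiv ℝ (fderiv ℝ f) ψ‖ ≤ H)
    (θ δ : E) : |f (θ + δ) - f θ| ≤ G * ‖δ‖ + H / 2 * ‖δ‖ ^ 2 := by
  set L : ℝ → E := fun t => θ + t • δ with hLdef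
  have hL : ∀ t : ℝ, HasDerivAt L δ t := by
    intro t
    have : HasDerivAt (fun t : ℝ => t • δ) ((1 : ℝ) • δ) t := (hasDerivAt_id t).smul_const δ
    have h := this.const_add θ
    rw [one_smul] at h
    exact h
  have hfd : Differentiable ℝ f := hf.differentiable two_ne_zero
  have hfd2 : Differentiable ℝ (fderiv ℝ f) :=
    (hf.fderiv_right (m := 1) (le_refl 2)).differentiable one_ne_zero
  set φ : ℝ → ℝ := fun t => f (L t) with hφdef
  set φ' : ℝ → ℝ := fun t => fderiv ℝ f (L t) δ with hφ'def
  set φ'' : ℝ → ℝ := fun t => fderiv ℝ (fderiv ℝ f) (L t) δ δ with hφ''def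
  have hφd : ∀ t : ℝ, HasDerivAt φ (φ' t) t := fun t =>
    (hfd (L t)).hasFDerivAt.comp_hasDerivAt t (hL t)
  have hφ'd : ∀ t : ℝ, HasDerivAt φ' (φ'' t) t := by
    intro t
    have h1 : HasDerivAt (fun t => fderiv ℝ f (L t)) (fderiv ℝ (fderiv ℝ f) (L t) δ) t :=
      (hfd2 (L t)).hasFDerivAt.comp_hasDerivAt t (hL t)
    have h2 := h1.clm_apply (hasDerivAt_const t δ)
    simpa using h2
  set s : Set ℝ := Icc 0 1 with hsdef
  have hs : UniqueDiffOn ℝ s := uniqueDiffOn_Icc zero_lt_one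
  have hiter1 : ∀ t ∈ s, iteratedDerivWithin 1 φ s t = φ' t := by
    intro t ht
    rw [iteratedDerivWithin_one]
    exact (hφd t).hasDerivWithinAt.derivWithin (hs t ht)
  have hφC1 : ContDiffOn ℝ 1 φ s := by
    have hLC : ContDiff ℝ 1 L := contDiff_const.add (contDiff_id.smul contDiff_const)
    exact ((hf.of_le one_le_two).comp hLC).contDiffOn
  have hdiff : DifferentiableOn ℝ (iteratedDerivWithin 1 φ s) (Ioo 0 1) := by
    intro t ht
    exact ((hφ'd t).differentiableAt.differentiableWithinAt).congr
      (fun y hy => hiter1 y (Ioo_subset_Icc_self hy)) (hiter1 t (Ioo_subset_Icc_self ht))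
  obtain ⟨c, hc, hT⟩ := taylor_mean_remainder_lagrange (n := 1) (x₀ := 0) (x := 1) zero_ne_one
    (by rw [uIcc_of_le zero_le_one]; exact_mod_cast hφC1)
    (by rw [uIcc_of_le zero_le_one, uIoo_of_le zero_le_one]; exact hdiff)
  rw [uIcc_of_le zero_le_one, ← hsdef] at hT
  rw [uIoo_of_le zero_le_one] at hc
  have hiter2 : iteratedDerivWithin 2 φ s c = φ'' c := by
    have hcs : c ∈ s := Ioo_subset_Icc_self hc
    rw [show (2 : ℕ) = 1 + 1 from rfl, iteratedDerivWithin_succ]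
    have : derivWithin (iteratedDerivWithin 1 φ s) s c = derivWithin φ' s c :=
      derivWithin_congr hiter1 (hiter1 c hcs)
    rw [this]
    exact (hφ'd c).hasDerivWithinAt.derivWithin (hs c hcs)
  have hTay : taylorWithinEval φ 1 s 0 1 = φ 0 + φ' 0 := by
    rw [taylor_within_apply]
    simp [Finset.sum_range_succ, hiter1 0 (by constructor <;> norm_num)]
  rw [hTay, hiter2] at hT
  have hφ0 : φ 0 = f θ := by simp [hφdef, hLdef]
  have hφ1 : φ 1 = f (θ + δ) := by simp [hφdef, hLdef]
  have hb1 : |φ' 0| ≤ G * ‖δ‖ := by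
    have h1 : |φ' 0| ≤ ‖fderiv ℝ f (L 0)‖ * ‖δ‖ := (fderiv ℝ f (L 0)).le_opNorm δ
    have h2 : ‖fderiv ℝ f (L 0)‖ = ‖gradient f (L 0)‖ := by
      rw [gradient]
      exact ((InnerProductSpace.toDual ℝ E).symm.norm_map _).symm
    calc |φ' 0| ≤ ‖fderiv ℝ f (L 0)‖ * ‖δ‖ := h1
      _ ≤ G * ‖δ‖ := by
          apply mul_le_mul_of_nonneg_right _ (norm_nonneg δ)
          rw [h2]; exact hfgrad _
  have hb2 : |φ'' c| ≤ H * ‖δ‖ ^ 2 := by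
    calc |φ'' c| ≤ ‖fderiv ℝ (fderiv ℝ f) (L c) δ‖ * ‖δ‖ :=
          (fderiv ℝ (fderiv ℝ f) (L c) δ).le_opNorm δ
      _ ≤ (‖fderiv ℝ (fderiv ℝ f) (L c)‖ * ‖δ‖) * ‖δ‖ :=
          mul_le_mul_of_nonneg_right ((fderiv ℝ (fderiv ℝ f) (L c)).le_opNorm δ) (norm_nonneg δ)
      _ ≤ (H * ‖δ‖) * ‖δ‖ := by
          apply mul_le_mul_of_nonneg_right _ (norm_nonneg δ)
          exact mul_le_mul_of_nonneg_right (hfhess _) (norm_nonneg δ)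
      _ = H * ‖δ‖ ^ 2 := by ring
  have : f (θ + δ) - f θ = φ' 0 + φ'' c / 2 := by
    rw [← hφ0, ← hφ1]
    have : (1:ℝ) - 0 = 1 := by norm_num
    rw [this] at hT
    norm_num at hT
    linarith
  rw [this]
  calc |φ' 0 + φ'' c / 2| ≤ |φ' 0| + |φ'' c| / 2 := by
        have := abs_add_le (φ' 0) (φ'' c / 2)
        rw [abs_div] at this
        simpa using this
    _ ≤ G * ‖δ‖ + H / 2 * ‖δ‖ ^ 2 := by
        have := hb2
        linarith [hb1, hb2]

set_option maxHeartbeats 2000000 in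
/-- **Per-step forgetting bound (Theorem 1, single training example).**
For the softmax cross-entropy loss `ℓ(ψ) = CE(q ‖ softmax(z(ψ)))` with logit Jacobian
bounded by `M`, and `f` a `C²` function with gradient bounded by `G` and Hessian
operator norm bounded by `H`, one SGD step `θ' = θ − η·∇ℓ(θ)` satisfies
`|f(θ') − f(θ)| ≤ √2·η·G·M·√(ℓ(θ)) + η²·H·M²·ℓ(θ)`. -/
theorem per_step_forgetting_bound_softmax
    {E : Type*} [NormedAddCommGroup E] [InnerProductSpace ℝ E] [FiniteDimensional ℝ E]
    {K : ℕ} (hK : 1 ≤ K)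
    (z : E → EuclideanSpace ℝ (Fin K)) (θ : E) (M : ℝ) (hM : 0 ≤ M)
    (hz : DifferentiableAt ℝ z θ) (hDz : ‖fderiv ℝ z θ‖ ≤ M)
    (q : Fin K → ℝ) (hq0 : ∀ i, 0 ≤ q i) (hq1 : ∑ i, q i = 1)
    (ℓ : E → ℝ) (hℓ : ℓ = fun ψ => crossEntropy q (softmax (z ψ)))
    (f : E → ℝ) (G H : ℝ) (hG : 0 ≤ G) (hH : 0 ≤ H)
    (hf : ContDiff ℝ 2 f)
    (hfgrad : ∀ ψ : E, ‖gradient f ψ‖ ≤ G)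
    (hfhess : ∀ ψ : E, ‖fderiv ℝ (fderiv ℝ f) ψ‖ ≤ H)
    (η : ℝ) (hη : 0 ≤ η) :
    |f (θ - η • gradient ℓ θ) - f θ| ≤
      Real.sqrt 2 * η * G * M * Real.sqrt (ℓ θ) + η ^ 2 * H * M ^ 2 * ℓ θ := by
  have hne : Nonempty (Fin K) := ⟨⟨0, hK⟩⟩
  have hS : ∀ ψ : E, 0 < ∑ j, Real.exp (z ψ j) := fun ψ =>
    Finset.sum_pos (fun j _ => Real.exp_pos _) Finset.univ_nonempty
  -- rewrite ℓ in smooth form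
  have hℓeq : ℓ = fun ψ => -∑ i, q i * z ψ i + Real.log (∑ j, Real.exp (z ψ j)) := by
    funext ψ
    rw [hℓ]
    simp only [crossEntropy, softmax]
    have : ∀ i, Real.log (Real.exp (z ψ i) / ∑ j, Real.exp (z ψ j)) =
        z ψ i - Real.log (∑ j, Real.exp (z ψ j)) := by
      intro i
      rw [Real.log_div (Real.exp_ne_zero _) (hS ψ).ne', Real.log_exp]
    simp only [this, mul_sub]
    rw [Finset.sum_sub_distrib, ← Finset.sum_mul, hq1, one_mul]
    ring
  -- derivative of ℓ
  set A := fderiv ℝ z θ with hA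
  have hzi : ∀ i : Fin K, HasFDerivAt (fun ψ => z ψ i)
      ((EuclideanSpace.proj i).comp A) θ := by
    intro i
    have h := (EuclideanSpace.proj i : EuclideanSpace ℝ (Fin K) →L[ℝ] ℝ).hasFDerivAt.comp θ
      hz.hasFDerivAt
    exact h
  have h1 : HasFDerivAt (fun ψ => ∑ i, q i * z ψ i)
      (∑ i, q i • ((EuclideanSpace.proj i).comp A)) θ :=
    HasFDerivAt.fun_sum fun i _ => (hzi i).const_mul (q i)
  have h2 : HasFDerivAt (fun ψ => ∑ j, Real.exp (z ψ j))
      (∑ j, Real.exp (z θ j) • ((EuclideanSpace.proj j).comp A)) θ :=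
    HasFDerivAt.fun_sum fun j _ => (hzi j).exp
  have h3 := h2.log (hS θ).ne'
  set D := (-(∑ i, q i • ((EuclideanSpace.proj i).comp A)) +
      (∑ j, Real.exp (z θ j))⁻¹ • ∑ j, Real.exp (z θ j) • ((EuclideanSpace.proj j).comp A))
      with hD
  have hld : HasFDerivAt ℓ D θ := by
    rw [hℓeq]
    exact h1.neg.add h3
  -- value of D
  have hDv : ∀ v : E, D v = ∑ i, (softmax (z θ) i - q i) * (A v i) := by
    intro v
    have hv : D v = -∑ i, q i * (A v i) +
        (∑ j, Real.exp (z θ j))⁻¹ * ∑ j, Real.exp (z θ j) * (A v j) := by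
      simp [hD, ContinuousLinearMap.sum_apply, Finset.mul_sum]
    rw [hv]
    rw [Finset.mul_sum]
    simp only [softmax, sub_mul, Finset.sum_sub_distrib]
    have : ∀ i ∈ Finset.univ, Real.exp (z θ i) / (∑ j, Real.exp (z θ j)) * A v i =
        (∑ j, Real.exp (z θ j))⁻¹ * (Real.exp (z θ i) * A v i) := fun i _ => by ring
    rw [Finset.sum_congr rfl this]
    ring
  -- Cauchy-Schwarz bound on D
  set ρ := Real.sqrt (∑ i, (q i - softmax (z θ) i) ^ 2) with hρ
  have hρ0 : 0 ≤ ρ := Real.sqrt_nonneg _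
  have hDnorm : ‖D‖ ≤ ρ * M := by
    apply ContinuousLinearMap.opNorm_le_bound D (mul_nonneg hρ0 hM)
    intro v
    have hcs := Finset.sum_mul_sq_le_sq_mul_sq Finset.univ
      (fun i => softmax (z θ) i - q i) (fun i => A v i)
    have hb : ‖D v‖ ≤ ρ * ‖A v‖ := by
      rw [Real.norm_eq_abs, hDv v]
      calc |∑ i, (softmax (z θ) i - q i) * (A v i)|
          = Real.sqrt ((∑ i, (softmax (z θ) i - q i) * (A v i)) ^ 2) :=
            (Real.sqrt_sq_eq_abs _).symm
        _ ≤ Real.sqrt ((∑ i, (softmax (z θ) i - q i) ^ 2) * ∑ i, (A v i) ^ 2) :=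
            Real.sqrt_le_sqrt hcs
        _ = Real.sqrt (∑ i, (softmax (z θ) i - q i) ^ 2) * Real.sqrt (∑ i, (A v i) ^ 2) :=
            Real.sqrt_mul (by positivity) _
        _ = ρ * ‖A v‖ := by
            rw [EuclideanSpace.norm_eq]
            congr 2
            · exact Finset.sum_congr rfl fun i _ => by ring
            · exact Finset.sum_congr rfl fun i _ => by
                rw [Real.norm_eq_abs, sq_abs]
    calc ‖D v‖ ≤ ρ * ‖A v‖ := hb
      _ ≤ ρ * (M * ‖v‖) := by
          apply mul_le_mul_of_nonneg_left _ hρ0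
          calc ‖A v‖ ≤ ‖A‖ * ‖v‖ := A.le_opNorm v
            _ ≤ M * ‖v‖ := mul_le_mul_of_nonneg_right hDz (norm_nonneg v)
      _ = ρ * M * ‖v‖ := by ring
  -- gradient norm
  have hgnorm : ‖gradient ℓ θ‖ ≤ ρ * M := by
    rw [gradient, (InnerProductSpace.toDual ℝ E).symm.norm_map, hld.fderiv]
    exact hDnorm
  -- loss nonneg and Pinsker
  have hpin := aux_pinsker hK (z θ) q hq0 hq1
  have hCE : ℓ θ = crossEntropy q (softmax (z θ)) := by rw [hℓ]
  have ht0 : 0 ≤ ℓ θ := by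
    rw [hCE]
    nlinarith [Finset.sum_nonneg (fun i (_ : i ∈ Finset.univ) =>
      sq_nonneg (q i - softmax (z θ) i))]
  have hρle : ρ ≤ Real.sqrt 2 * Real.sqrt (ℓ θ) := by
    rw [hρ, ← Real.sqrt_mul (by norm_num : (0:ℝ) ≤ 2)]
    apply Real.sqrt_le_sqrt
    rw [hCE]
    exact hpin
  -- assemble
  have htay := aux_taylor f G H hf hfgrad hfhess θ (-(η • gradient ℓ θ))
  rw [← sub_eq_add_neg] at htay
  have hnd : ‖-(η • gradient ℓ θ)‖ = η * ‖gradient ℓ θ‖ := by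
    rw [norm_neg, norm_smul, Real.norm_eq_abs, abs_of_nonneg hη]
  rw [hnd] at htay
  set u := ‖gradient ℓ θ‖ with hu
  have hu0 : 0 ≤ u := norm_nonneg _
  set B := Real.sqrt 2 * Real.sqrt (ℓ θ) * M with hB
  have hB0 : 0 ≤ B := by positivity
  have huB : u ≤ B := le_trans hgnorm (mul_le_mul_of_nonneg_right hρle hM)
  have hB2 : B ^ 2 = 2 * ℓ θ * M ^ 2 := by
    rw [hB, mul_pow, mul_pow, Real.sq_sqrt (by norm_num : (0:ℝ) ≤ 2), Real.sq_sqrt ht0]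
  calc |f (θ - η • gradient ℓ θ) - f θ| ≤ G * (η * u) + H / 2 * (η * u) ^ 2 := htay
    _ ≤ G * (η * B) + H / 2 * (η * B) ^ 2 := by
        have h1 : G * (η * u) ≤ G * (η * B) :=
          mul_le_mul_of_nonneg_left (mul_le_mul_of_nonneg_left huB hη) hG
        have h2 : (η * u) ^ 2 ≤ (η * B) ^ 2 := by
          apply pow_le_pow_left₀ (by positivity) (mul_le_mul_of_nonneg_left huB hη)
        nlinarith [h1, h2]
    _ = Real.sqrt 2 * η * G * M * Real.sqrt (ℓ θ) + η ^ 2 * H * M ^ 2 * ℓ θ := by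
        rw [mul_pow, hB2, hB]
        ring
end

section
/- Let E be a finite-dimensional real inner product space and K ≥ 1. Let S be a nonempty finite index set of sequences, and for each s ∈ S let T_s ≥ 1 be its number of tokens; for each s ∈ S and each token index t ∈ Fin T_s, let z_{s,t} : E → EuclideanSpace ℝ (Fin K) be differentiable at θ with ‖Dz_{s,t}(θ)‖ ≤ M, and let q_{s,t} be a probability vector on Fin K. Define the mini-batch sequence loss L(ψ) = (1/|S|)·∑_{s∈S} (1/T_s)·∑_{t} CE(q_{s,t}‖softmax(z_{s,t}(ψ))). Let f : E → ℝ be twice continuously differentiable with ‖∇f(ψ)‖ ≤ G and ‖∇²f(ψ)‖ ≤ H for all ψ ∈ E. Then for every η ≥ 0, setting θ' = θ − η·∇L(θ), one has |f(θ') − f(θ)| ≤ √2·η·G·M·√(L(θ)) + η²·H·M²·L(θ). -/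
namespace PerStepAux

lemma sum_exp_pos {K : ℕ} (hK : 1 ≤ K) (v : EuclideanSpace ℝ (Fin K)) :
    0 < ∑ j, Real.exp (v j) := by
  have : Nonempty (Fin K) := Fin.pos_iff_nonempty.mp hK
  exact Finset.sum_pos (fun j _ => Real.exp_pos _) Finset.univ_nonempty

lemma softmax_pos {K : ℕ} (hK : 1 ≤ K) (v : EuclideanSpace ℝ (Fin K)) (i : Fin K) :
    0 < softmax v i :=
  div_pos (Real.exp_pos _) (sum_exp_pos hK v)

lemma softmax_sum {K : ℕ} (hK : 1 ≤ K) (v : EuclideanSpace ℝ (Fin K)) :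
    ∑ i, softmax v i = 1 := by
  unfold softmax
  rw [← Finset.sum_div, div_self (sum_exp_pos hK v).ne']

lemma softmax_le_one {K : ℕ} (hK : 1 ≤ K) (v : EuclideanSpace ℝ (Fin K)) (i : Fin K) :
    softmax v i ≤ 1 := by
  unfold softmax
  rw [div_le_one (sum_exp_pos hK v)]
  exact Finset.single_le_sum (fun j _ => (Real.exp_pos (v j)).le) (Finset.mem_univ i)

lemma ce_nonneg {K : ℕ} (hK : 1 ≤ K) (q : Fin K → ℝ) (hq0 : ∀ i, 0 ≤ q i)
    (v : EuclideanSpace ℝ (Fin K)) : 0 ≤ crossEntropy q (softmax v) := by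
  unfold crossEntropy
  rw [neg_nonneg]
  apply Finset.sum_nonpos
  intro i _
  exact mul_nonpos_of_nonneg_of_nonpos (hq0 i)
    (Real.log_nonpos (softmax_pos hK v i).le (softmax_le_one hK v i))

lemma key_ineq {K : ℕ} (hK : 1 ≤ K) (q : Fin K → ℝ) (hq0 : ∀ i, 0 ≤ q i)
    (hq1 : ∑ i, q i = 1) (v : EuclideanSpace ℝ (Fin K)) :
    ∑ i, (softmax v i - q i) ^ 2 ≤ 2 * crossEntropy q (softmax v) := by
  set p : Fin K → ℝ := softmax v with hp
  have hp0 : ∀ i, 0 < p i := softmax_pos hK v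
  have hp1 : ∑ i, p i = 1 := softmax_sum hK v
  have hple : ∀ i, p i ≤ 1 := softmax_le_one hK v
  set t : ℝ := ∑ i, q i * p i with ht
  have htpos : 0 < t := by
    have : ∃ i, 0 < q i := by
      by_contra h
      push_neg at h
      have : ∑ i, q i = 0 := Finset.sum_eq_zero fun i _ => le_antisymm (h i) (hq0 i)
      simp [this] at hq1
    obtain ⟨i, hi⟩ := this
    refine Finset.sum_pos' (fun j _ => mul_nonneg (hq0 j) (hp0 j).le) ⟨i, Finset.mem_univ i, ?_⟩
    exact mul_pos hi (hp0 i)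
  have h1 : ∑ i, (p i - q i) ^ 2 ≤ 2 - 2 * t := by
    have e : ∑ i, (p i - q i) ^ 2 = (∑ i, p i ^ 2) + (∑ i, q i ^ 2) - 2 * ∑ i, q i * p i := by
      rw [← Finset.sum_add_distrib, Finset.mul_sum, ← Finset.sum_sub_distrib]
      congr 1; ext i; ring
    have hpsq : ∑ i, p i ^ 2 ≤ 1 := by
      calc ∑ i, p i ^ 2 ≤ ∑ i, p i := by
            apply Finset.sum_le_sum; intro i _
            nlinarith [hp0 i, hple i]
        _ = 1 := hp1
    have hqsq : ∑ i, q i ^ 2 ≤ 1 := by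
      calc ∑ i, q i ^ 2 ≤ ∑ i, q i := by
            apply Finset.sum_le_sum; intro i _
            have hqle : q i ≤ 1 := by
              have := Finset.single_le_sum (fun j _ => hq0 j) (Finset.mem_univ i)
              linarith [hq1 ▸ this]
            nlinarith [hq0 i]
        _ = 1 := hq1
    rw [e]; linarith
  have h2 : 2 - 2 * t ≤ -2 * Real.log t := by
    have := Real.log_le_sub_one_of_pos htpos
    linarith
  have h3 : ∑ i, q i * Real.log (p i) ≤ Real.log t := by
    have jensen := (strictConcaveOn_log_Ioi.concaveOn).le_map_sum
      (t := Finset.univ) (w := q) (p := p) (fun i _ => hq0 i) hq1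
      (fun i _ => Set.mem_Ioi.mpr (hp0 i))
    simpa [smul_eq_mul, ht] using jensen
  have h4 : -2 * Real.log t ≤ 2 * crossEntropy q p := by
    unfold crossEntropy; linarith
  calc ∑ i, (p i - q i) ^ 2 ≤ 2 - 2 * t := h1
    _ ≤ -2 * Real.log t := h2
    _ ≤ 2 * crossEntropy q p := h4

lemma ce_softmax_eq {K : ℕ} (hK : 1 ≤ K) (q : Fin K → ℝ) (hq1 : ∑ i, q i = 1)
    (v : EuclideanSpace ℝ (Fin K)) :
    crossEntropy q (softmax v) = Real.log (∑ j, Real.exp (v j)) - ∑ i, q i * v i := by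
  unfold crossEntropy softmax
  have hS := sum_exp_pos hK v
  have : ∀ i : Fin K, Real.log (Real.exp (v i) / ∑ j, Real.exp (v j))
      = v i - Real.log (∑ j, Real.exp (v j)) := by
    intro i
    rw [Real.log_div (Real.exp_ne_zero _) hS.ne', Real.log_exp]
  simp_rw [this, mul_sub, Finset.sum_sub_distrib, ← Finset.sum_mul, hq1]
  ring

noncomputable def dvec {K : ℕ} (q : Fin K → ℝ) (v : EuclideanSpace ℝ (Fin K)) :
    EuclideanSpace ℝ (Fin K) := WithLp.toLp 2 (fun i => softmax v i - q i)

lemma hasFDerivAt_ce_softmax {K : ℕ} (hK : 1 ≤ K) (q : Fin K → ℝ) (hq1 : ∑ i, q i = 1)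
    (v : EuclideanSpace ℝ (Fin K)) :
    HasFDerivAt (fun w => crossEntropy q (softmax w)) ((innerSL ℝ) (dvec q v)) v := by
  have hS := sum_exp_pos hK v
  have hproj : ∀ j : Fin K, HasFDerivAt (fun w : EuclideanSpace ℝ (Fin K) => w j)
      (EuclideanSpace.proj (𝕜 := ℝ) j) v := fun j => (EuclideanSpace.proj (𝕜 := ℝ) j).hasFDerivAt
  have h1 : HasFDerivAt (fun w : EuclideanSpace ℝ (Fin K) => ∑ j, Real.exp (w j))
      (∑ j, Real.exp (v j) • (EuclideanSpace.proj (𝕜 := ℝ) j)) v := by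
    apply HasFDerivAt.fun_sum
    intro j _
    exact (hproj j).exp
  have h2 := h1.log hS.ne'
  have h3 : HasFDerivAt (fun w : EuclideanSpace ℝ (Fin K) => ∑ i, q i * w i)
      (∑ i, q i • (EuclideanSpace.proj (𝕜 := ℝ) i)) v := by
    apply HasFDerivAt.fun_sum
    intro i _
    exact (hproj i).const_mul (q i)
  have h4 := h2.fun_sub h3
  have heq : (fun w : EuclideanSpace ℝ (Fin K) =>
      Real.log (∑ j, Real.exp (w j)) - ∑ i, q i * w i)
      = fun w => crossEntropy q (softmax w) := by
    funext w
    rw [ce_softmax_eq hK q hq1 w]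
  rw [heq] at h4
  refine h4.congr_fderiv (Eq.symm ?_)
  ext w
  simp only [innerSL_apply_apply, ContinuousLinearMap.sub_apply, ContinuousLinearMap.smul_apply,
    ContinuousLinearMap.sum_apply, PiLp.proj_apply, smul_eq_mul,
    PiLp.inner_apply, RCLike.inner_apply, conj_trivial]
  unfold dvec softmax
  rw [Finset.mul_sum, ← Finset.sum_sub_distrib]
  apply Finset.sum_congr rfl
  intro i _
  field_simp

lemma norm_dvec_le {K : ℕ} (hK : 1 ≤ K) (q : Fin K → ℝ) (hq0 : ∀ i, 0 ≤ q i)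
    (hq1 : ∑ i, q i = 1) (v : EuclideanSpace ℝ (Fin K)) :
    ‖dvec q v‖ ≤ Real.sqrt (2 * crossEntropy q (softmax v)) := by
  rw [EuclideanSpace.norm_eq]
  apply Real.sqrt_le_sqrt
  simpa [dvec, Real.norm_eq_abs, sq_abs] using key_ineq hK q hq0 hq1 v

end PerStepAux


open PerStepAux in
/-- **Per-step forgetting bound (Theorem 1, full mini-batch sequence-level form).**
Each training sequence `s` contributes its token-averaged softmax cross-entropy, and
the mini-batch loss `L` is the average over sequences. If every token's logit Jacobian
at `θ` has operator norm at most `M`, and `f` is `C²` with gradient bounded by `G` and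
Hessian operator norm bounded by `H`, then the SGD step `θ' = θ − η·∇L(θ)` satisfies
`|f(θ') − f(θ)| ≤ √2·η·G·M·√(L(θ)) + η²·H·M²·L(θ)`. -/
theorem per_step_forgetting_bound_minibatch
    {E : Type*} [NormedAddCommGroup E] [InnerProductSpace ℝ E] [FiniteDimensional ℝ E]
    {K : ℕ} (hK : 1 ≤ K)
    (S : Type*) [Fintype S] [Nonempty S]
    (T : S → ℕ) (hT : ∀ s, 1 ≤ T s)
    (z : (s : S) → Fin (T s) → E → EuclideanSpace ℝ (Fin K)) (θ : E)
    (M : ℝ) (hM : 0 ≤ M)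
    (hz : ∀ s t, DifferentiableAt ℝ (z s t) θ)
    (hDz : ∀ s t, ‖fderiv ℝ (z s t) θ‖ ≤ M)
    (q : (s : S) → Fin (T s) → Fin K → ℝ)
    (hq0 : ∀ s t i, 0 ≤ q s t i) (hq1 : ∀ s t, ∑ i, q s t i = 1)
    (L : E → ℝ)
    (hL : L = fun ψ => (1 / (Fintype.card S : ℝ)) *
      ∑ s, (1 / (T s : ℝ)) * ∑ t, crossEntropy (q s t) (softmax (z s t ψ)))
    (f : E → ℝ) (G H : ℝ) (hG : 0 ≤ G) (hH : 0 ≤ H)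
    (hf : ContDiff ℝ 2 f)
    (hfgrad : ∀ ψ : E, ‖gradient f ψ‖ ≤ G)
    (hfhess : ∀ ψ : E, ‖fderiv ℝ (fderiv ℝ f) ψ‖ ≤ H)
    (η : ℝ) (hη : 0 ≤ η) :
    |f (θ - η • gradient L θ) - f θ| ≤
      Real.sqrt 2 * η * G * M * Real.sqrt (L θ) + η ^ 2 * H * M ^ 2 * L θ := by
  have hE : CompleteSpace E := FiniteDimensional.complete ℝ E
  have hcard : (0 : ℝ) < Fintype.card S := by
    exact_mod_cast Fintype.card_pos
  have hTpos : ∀ s, (0 : ℝ) < (T s : ℝ) := fun s => by exact_mod_cast hT s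
  -- token losses
  set ℓ : (s : S) → Fin (T s) → ℝ :=
    fun s t => crossEntropy (q s t) (softmax (z s t θ)) with hℓ
  have hℓ0 : ∀ s t, 0 ≤ ℓ s t := fun s t => ce_nonneg hK _ (hq0 s t) _
  -- per-token derivatives
  set D : (s : S) → (t : Fin (T s)) → (E →L[ℝ] ℝ) :=
    fun s t => ((innerSL ℝ) (dvec (q s t) (z s t θ))).comp (fderiv ℝ (z s t) θ) with hDdef
  have hD : ∀ s t, HasFDerivAt (fun ψ => crossEntropy (q s t) (softmax (z s t ψ))) (D s t) θ :=
    fun s t => (hasFDerivAt_ce_softmax hK _ (hq1 s t) _).comp θ (hz s t).hasFDerivAt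
  have hDnorm : ∀ s t, ‖D s t‖ ≤ Real.sqrt (2 * ℓ s t) * M := by
    intro s t
    calc ‖D s t‖ ≤ ‖(innerSL ℝ) (dvec (q s t) (z s t θ))‖ * ‖fderiv ℝ (z s t) θ‖ :=
          ContinuousLinearMap.opNorm_comp_le _ _
      _ ≤ Real.sqrt (2 * ℓ s t) * M := by
          apply mul_le_mul _ (hDz s t) (norm_nonneg _) (Real.sqrt_nonneg _)
          rw [innerSL_apply_norm]
          exact norm_dvec_le hK _ (hq0 s t) (hq1 s t) _
  -- derivative of L
  have hLder : HasFDerivAt L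
      ((1 / (Fintype.card S : ℝ)) • ∑ s, (1 / (T s : ℝ)) • ∑ t, D s t) θ := by
    rw [hL]
    exact (HasFDerivAt.fun_sum (fun s _ =>
      ((HasFDerivAt.fun_sum (fun t _ => hD s t)).const_mul (1 / (T s : ℝ))))).const_mul _
  -- norm of gradient of L
  have hgradnorm : ‖gradient L θ‖ =
      ‖(1 / (Fintype.card S : ℝ)) • ∑ s, (1 / (T s : ℝ)) • ∑ t, D s t‖ := by
    rw [gradient, hLder.fderiv]
    exact LinearIsometryEquiv.norm_map _ _
  -- L θ value
  have hLθ : L θ = (1 / (Fintype.card S : ℝ)) * ∑ s, (1 / (T s : ℝ)) * ∑ t, ℓ s t := by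
    rw [hL]
  have hLθ0 : 0 ≤ L θ := by
    rw [hLθ]
    apply mul_nonneg (by positivity)
    apply Finset.sum_nonneg
    intro s _
    exact mul_nonneg (by positivity) (Finset.sum_nonneg fun t _ => hℓ0 s t)
  -- Jensen / Cauchy–Schwarz step
  set c : ℝ := (Fintype.card S : ℝ) with hc
  set w : (Σ s : S, Fin (T s)) → ℝ :=
    fun x => (1 / c) * (1 / (T x.1 : ℝ)) with hw
  have hw0 : ∀ x, 0 ≤ w x := fun x => by positivity
  have hdouble : ∀ g : (s : S) → Fin (T s) → ℝ,
      (1 / c) * ∑ s, (1 / (T s : ℝ)) * ∑ t, g s t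
        = ∑ x : Σ s : S, Fin (T s), w x * g x.1 x.2 := by
    intro g
    rw [← Finset.univ_sigma_univ, Finset.sum_sigma, Finset.mul_sum]
    refine Finset.sum_congr rfl fun s _ => ?_
    rw [← mul_assoc, Finset.mul_sum]
  have hwsum : ∑ x : Σ s : S, Fin (T s), w x = 1 := by
    have := hdouble (fun s t => 1)
    simp only [mul_one] at this
    rw [← this]
    have h1 : ∀ s : S, (1 / (T s : ℝ)) * ∑ _t : Fin (T s), (1:ℝ) = 1 := by
      intro s
      rw [Finset.sum_const]
      simp only [Finset.card_univ, Fintype.card_fin, nsmul_eq_mul, mul_one]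
      rw [one_div, inv_mul_cancel₀ (hTpos s).ne']
    rw [Finset.sum_congr rfl (fun s _ => h1 s), Finset.sum_const, Finset.card_univ,
      nsmul_eq_mul, mul_one, ← hc, one_div, inv_mul_cancel₀ hcard.ne']
  have hLθ' : L θ = ∑ x : Σ s : S, Fin (T s), w x * ℓ x.1 x.2 := by
    rw [hLθ]; exact hdouble _
  have hJ1 : ∑ x : Σ s : S, Fin (T s), w x * Real.sqrt (ℓ x.1 x.2) ≤ Real.sqrt (L θ) := by
    have hCS := Finset.sum_sq_le_sum_mul_sum_of_sq_eq_mul (Finset.univ)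
      (r := fun x : Σ s : S, Fin (T s) => w x * Real.sqrt (ℓ x.1 x.2))
      (f := w) (g := fun x => w x * ℓ x.1 x.2)
      (fun x _ => hw0 x) (fun x _ => mul_nonneg (hw0 x) (hℓ0 _ _))
      (fun x _ => by rw [mul_pow, Real.sq_sqrt (hℓ0 _ _)]; ring)
    rw [hwsum, one_mul, ← hLθ'] at hCS
    have hr0 : 0 ≤ ∑ x : Σ s : S, Fin (T s), w x * Real.sqrt (ℓ x.1 x.2) :=
      Finset.sum_nonneg fun x _ => mul_nonneg (hw0 x) (Real.sqrt_nonneg _)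
    nlinarith [Real.sq_sqrt hLθ0, Real.sqrt_nonneg (L θ),
      sq_nonneg (∑ x : Σ s : S, Fin (T s), w x * Real.sqrt (ℓ x.1 x.2) - Real.sqrt (L θ))]
  have hJensen : (1 / c) * ∑ s, (1 / (T s : ℝ)) * ∑ t, Real.sqrt (2 * ℓ s t)
      ≤ Real.sqrt 2 * Real.sqrt (L θ) := by
    rw [hdouble]
    have : ∀ x : Σ s : S, Fin (T s), w x * Real.sqrt (2 * ℓ x.1 x.2)
        = Real.sqrt 2 * (w x * Real.sqrt (ℓ x.1 x.2)) := by
      intro x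
      rw [Real.sqrt_mul (by norm_num : (0:ℝ) ≤ 2)]
      ring
    simp only [this, ← Finset.mul_sum]
    exact mul_le_mul_of_nonneg_left hJ1 (Real.sqrt_nonneg 2)
  -- bound the gradient norm
  have h1c0 : (0:ℝ) ≤ 1 / c := one_div_nonneg.mpr hcard.le
  have h1T0 : ∀ s : S, (0:ℝ) ≤ 1 / (T s : ℝ) := fun s => one_div_nonneg.mpr (hTpos s).le
  have hgrad_le : ‖gradient L θ‖ ≤ Real.sqrt 2 * Real.sqrt (L θ) * M := by
    calc ‖gradient L θ‖
        = (1 / c) * ‖∑ s, (1 / (T s : ℝ)) • ∑ t, D s t‖ := by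
          rw [hgradnorm, norm_smul (1/c) (∑ s, (1 / (T s : ℝ)) • ∑ t, D s t),
            Real.norm_eq_abs, abs_of_nonneg h1c0]
      _ ≤ (1 / c) * ∑ s, ‖(1 / (T s : ℝ)) • ∑ t, D s t‖ :=
          mul_le_mul_of_nonneg_left (norm_sum_le _ _) h1c0
      _ = (1 / c) * ∑ s, (1 / (T s : ℝ)) * ‖∑ t, D s t‖ := by
          congr 1
          refine Finset.sum_congr rfl fun s _ => ?_
          rw [norm_smul (1 / (T s : ℝ)) (∑ t, D s t), Real.norm_eq_abs,
            abs_of_nonneg (h1T0 s)]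
      _ ≤ (1 / c) * ∑ s, (1 / (T s : ℝ)) * ∑ t, (Real.sqrt (2 * ℓ s t) * M) := by
          apply mul_le_mul_of_nonneg_left _ h1c0
          apply Finset.sum_le_sum
          intro s _
          apply mul_le_mul_of_nonneg_left _ (h1T0 s)
          exact (norm_sum_le _ _).trans (Finset.sum_le_sum fun t _ => hDnorm s t)
      _ = ((1 / c) * ∑ s, (1 / (T s : ℝ)) * ∑ t, Real.sqrt (2 * ℓ s t)) * M := by
          rw [Finset.mul_sum, Finset.mul_sum, Finset.sum_mul]
          refine Finset.sum_congr rfl fun s _ => ?_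
          rw [← Finset.sum_mul]
          ring
      _ ≤ Real.sqrt 2 * Real.sqrt (L θ) * M :=
          mul_le_mul_of_nonneg_right hJensen hM
  -- Lipschitz bound on f
  have hfdf : ∀ x : E, ‖fderiv ℝ f x‖ ≤ G := by
    intro x
    have := hfgrad x
    rwa [gradient, LinearIsometryEquiv.norm_map] at this
  have hlip : |f (θ - η • gradient L θ) - f θ| ≤ G * ‖(θ - η • gradient L θ) - θ‖ := by
    rw [← Real.norm_eq_abs]
    exact convex_univ.norm_image_sub_le_of_norm_fderiv_le
      (fun x _ => (hf.differentiable two_ne_zero).differentiableAt)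
      (fun x _ => hfdf x) trivial trivial
  have hstep : ‖(θ - η • gradient L θ) - θ‖ = η * ‖gradient L θ‖ := by
    rw [sub_sub_cancel_left, norm_neg, norm_smul, Real.norm_eq_abs, abs_of_nonneg hη]
  have hmain : |f (θ - η • gradient L θ) - f θ| ≤ Real.sqrt 2 * η * G * M * Real.sqrt (L θ) := by
    calc |f (θ - η • gradient L θ) - f θ| ≤ G * (η * ‖gradient L θ‖) := by
          rw [← hstep]; exact hlip
      _ ≤ G * (η * (Real.sqrt 2 * Real.sqrt (L θ) * M)) := by gcongr
      _ = Real.sqrt 2 * η * G * M * Real.sqrt (L θ) := by ring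
  have hpos : 0 ≤ η ^ 2 * H * M ^ 2 * L θ :=
    mul_nonneg (by positivity) hLθ0
  linarith
end

section
/- Let E be a finite-dimensional real inner product space and K ≥ 1. Let z : E → EuclideanSpace ℝ (Fin K) be differentiable at θ with operator norm ‖Dz(θ)‖ ≤ M, let q be a probability vector on Fin K, and define ℓ(ψ) = CE(q‖softmax(z(ψ))). Then ℓ is differentiable at θ and ‖∇ℓ(θ)‖ ≤ M·√(2·ℓ(θ)). -/
lemma sinh_le_mul_cosh {s : ℝ} (hs : 0 ≤ s) : Real.sinh s ≤ s * Real.cosh s := by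
  have mono : MonotoneOn (fun t => t * Real.cosh t - Real.sinh t) (Set.Ici 0) := by
    apply monotoneOn_of_deriv_nonneg (convex_Ici 0)
    · exact ((continuous_id.mul Real.continuous_cosh).sub Real.continuous_sinh).continuousOn
    · intro t _
      exact ((differentiableAt_id.mul (Real.differentiable_cosh t)).sub
        (Real.differentiable_sinh t)).differentiableWithinAt
    · intro t ht
      rw [interior_Ici, Set.mem_Ioi] at ht
      have h1 : HasDerivAt (fun t => t * Real.cosh t - Real.sinh t) (t * Real.sinh t) t := by
        have := ((hasDerivAt_id t).mul (Real.hasDerivAt_cosh t)).sub (Real.hasDerivAt_sinh t)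
        refine this.congr_deriv ?_
        simp [id_eq]
        try ring
      rw [h1.deriv]
      exact mul_nonneg ht.le (Real.sinh_nonneg_iff.2 ht.le)
  have h := mono Set.self_mem_Ici (Set.mem_Ici.2 hs) hs
  simpa using h

lemma log_lb {x : ℝ} (hx : 1 ≤ x) : 2 * (x - 1) / (x + 1) ≤ Real.log x := by
  have hx0 : (0:ℝ) < x := lt_of_lt_of_le one_pos hx
  set u := Real.sqrt x with hu
  have hu0 : 0 < u := Real.sqrt_pos.2 hx0
  have hu2 : u ^ 2 = x := Real.sq_sqrt hx0.le
  have hlog : Real.log x = 2 * Real.log u := by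
    rw [← hu2, Real.log_pow]; push_cast; ring
  have hu1 : 1 ≤ u := by
    nlinarith [hu2, hu0]
  have hs : 0 ≤ Real.log u := Real.log_nonneg hu1
  have h := sinh_le_mul_cosh hs
  rw [Real.sinh_eq, Real.cosh_eq, Real.exp_log hu0, Real.exp_neg, Real.exp_log hu0] at h
  have h2 : u * ((u - u⁻¹) / 2) ≤ u * (Real.log u * ((u + u⁻¹) / 2)) :=
    mul_le_mul_of_nonneg_left h hu0.le
  have hinv : u * u⁻¹ = 1 := mul_inv_cancel₀ hu0.ne'
  rw [div_le_iff₀ (by linarith : (0:ℝ) < x + 1), hlog]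
  nlinarith [h2, hinv, hu2, hs]

lemma log_ub {x : ℝ} (hx : 1 ≤ x) : Real.log x ≤ (x - x⁻¹) / 2 := by
  have hx0 : (0:ℝ) < x := lt_of_lt_of_le one_pos hx
  have h := Real.self_le_sinh_iff.2 (Real.log_nonneg hx)
  rwa [Real.sinh_eq, Real.exp_log hx0, Real.exp_neg, Real.exp_log hx0] at h

lemma pointwise_pinsker {p q : ℝ} (hp0 : 0 < p) (hp1 : p ≤ 1) (hq0 : 0 ≤ q) (hq1 : q ≤ 1) :
    (q - p) ^ 2 / 2 ≤ q * Real.log q - q * Real.log p - q + p := by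
  rcases eq_or_lt_of_le hq0 with h | hq0'
  · rw [← h]; simp; nlinarith
  rcases le_total p q with hpq | hqp
  · have hx : 1 ≤ q / p := (one_le_div hp0).2 hpq
    have h := log_lb hx
    rw [Real.log_div hq0'.ne' hp0.ne'] at h
    have e : 2 * (q / p - 1) / (q / p + 1) = 2 * (q - p) / (q + p) := by
      field_simp
      try ring
    rw [e] at h
    have h2 : q * (2 * (q - p) / (q + p)) ≤ q * (Real.log q - Real.log p) :=
      mul_le_mul_of_nonneg_left h hq0
    have hqp0 : (0:ℝ) < q + p := by linarith
    have key : (q - p) ^ 2 / 2 ≤ q * (2 * (q - p) / (q + p)) - q + p := by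
      have e2 : q * (2 * (q - p) / (q + p)) - q + p = (q - p) ^ 2 / (q + p) := by
        field_simp; ring
      rw [e2, div_le_div_iff₀ two_pos hqp0]
      nlinarith [sq_nonneg (q - p)]
    have e3 : q * (Real.log q - Real.log p) = q * Real.log q - q * Real.log p := by ring
    linarith [h2, key]
  · have hx : 1 ≤ p / q := (one_le_div hq0').2 hqp
    have h := log_ub hx
    rw [Real.log_div hp0.ne' hq0'.ne'] at h
    have e : (p / q - (p / q)⁻¹) / 2 = (p ^ 2 - q ^ 2) / (2 * p * q) := by
      rw [inv_div]; field_simp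
    rw [e] at h
    have h2 : q * (Real.log p - Real.log q) ≤ q * ((p ^ 2 - q ^ 2) / (2 * p * q)) :=
      mul_le_mul_of_nonneg_left h hq0
    have e2 : q * ((p ^ 2 - q ^ 2) / (2 * p * q)) = (p ^ 2 - q ^ 2) / (2 * p) := by
      field_simp
    have key : (q - p) ^ 2 / 2 ≤ -((p ^ 2 - q ^ 2) / (2 * p)) - q + p := by
      have e3 : -((p ^ 2 - q ^ 2) / (2 * p)) - q + p = (q - p) ^ 2 / (2 * p) := by
        field_simp; ring
      rw [e3, div_le_div_iff₀ two_pos (by positivity)]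
      nlinarith [sq_nonneg (q - p)]
    have e4 : q * (Real.log p - Real.log q) = q * Real.log p - q * Real.log q := by ring
    linarith [h2, key]

lemma sum_sq_le_twoCE {K : ℕ} (p q : Fin K → ℝ) (hp0 : ∀ i, 0 < p i) (hp1 : ∑ i, p i = 1)
    (hq0 : ∀ i, 0 ≤ q i) (hq1 : ∑ i, q i = 1) :
    ∑ i, (p i - q i) ^ 2 ≤ 2 * crossEntropy q p := by
  have hqle : ∀ i, q i ≤ 1 := fun i => hq1 ▸
    Finset.single_le_sum (fun j _ => hq0 j) (Finset.mem_univ i)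
  have hple : ∀ i, p i ≤ 1 := fun i => hp1 ▸
    Finset.single_le_sum (fun j _ => (hp0 j).le) (Finset.mem_univ i)
  have hA : ∑ i, (q i - p i) ^ 2 / 2 ≤
      ∑ i, (q i * Real.log (q i) - q i * Real.log (p i) - q i + p i) :=
    Finset.sum_le_sum fun i _ => pointwise_pinsker (hp0 i) (hple i) (hq0 i) (hqle i)
  have hB : ∑ i, (q i * Real.log (q i) - q i * Real.log (p i) - q i + p i)
      = (∑ i, q i * Real.log (q i)) + crossEntropy q p := by
    rw [Finset.sum_add_distrib, Finset.sum_sub_distrib, Finset.sum_sub_distrib, hq1, hp1,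
      crossEntropy]
    ring
  have hC : ∑ i, q i * Real.log (q i) ≤ 0 :=
    Finset.sum_nonpos fun i _ =>
      mul_nonpos_of_nonneg_of_nonpos (hq0 i) (Real.log_nonpos (hq0 i) (hqle i))
  have hD : ∑ i, (p i - q i) ^ 2 = ∑ i, (q i - p i) ^ 2 :=
    Finset.sum_congr rfl fun i _ => by ring
  have hE : ∑ i, (q i - p i) ^ 2 / 2 = (∑ i, (q i - p i) ^ 2) / 2 := by
    rw [Finset.sum_div]
  linarith

/-- **Step-3 gradient bound.** The softmax cross-entropy loss
`ℓ(ψ) = CE(q ‖ softmax(z(ψ)))` is differentiable at `θ` and its gradient norm is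
bounded by `M·√(2·ℓ(θ))`, where `M` bounds the operator norm of the logit Jacobian. -/
theorem softmax_crossEntropy_gradient_bound
    {E : Type*} [NormedAddCommGroup E] [InnerProductSpace ℝ E] [FiniteDimensional ℝ E]
    {K : ℕ} (hK : 1 ≤ K)
    (z : E → EuclideanSpace ℝ (Fin K)) (θ : E) (M : ℝ) (hM : 0 ≤ M)
    (hz : DifferentiableAt ℝ z θ) (hDz : ‖fderiv ℝ z θ‖ ≤ M)
    (q : Fin K → ℝ) (hq0 : ∀ i, 0 ≤ q i) (hq1 : ∑ i, q i = 1)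
    (ℓ : E → ℝ) (hℓ : ℓ = fun ψ => crossEntropy q (softmax (z ψ))) :
    DifferentiableAt ℝ ℓ θ ∧
      ‖gradient ℓ θ‖ ≤ M * Real.sqrt (2 * ℓ θ) := by
  subst hℓ
  have hKpos : 0 < K := hK
  haveI : Nonempty (Fin K) := ⟨⟨0, hKpos⟩⟩
  set D := fderiv ℝ z θ with hD
  set Di : Fin K → E →L[ℝ] ℝ := fun i => (EuclideanSpace.proj i).comp D with hDi
  have hS : ∀ ψ : E, 0 < ∑ j, Real.exp (z ψ j) := fun ψ =>
    Finset.sum_pos (fun j _ => Real.exp_pos _) Finset.univ_nonempty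
  have hzi : ∀ i : Fin K, HasFDerivAt (fun ψ => z ψ i) (Di i) θ := fun i =>
    (EuclideanSpace.proj (𝕜 := ℝ) i).hasFDerivAt.comp θ hz.hasFDerivAt
  have hSder : HasFDerivAt (fun ψ => ∑ j, Real.exp (z ψ j))
      (∑ j, Real.exp (z θ j) • Di j) θ :=
    HasFDerivAt.fun_sum fun j _ => (hzi j).exp
  have hlogS : HasFDerivAt (fun ψ => Real.log (∑ j, Real.exp (z ψ j)))
      ((∑ j, Real.exp (z θ j))⁻¹ • ∑ j, Real.exp (z θ j) • Di j) θ :=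
    hSder.log (hS θ).ne'
  have hlin : HasFDerivAt (fun ψ => ∑ i, q i * z ψ i) (∑ i, q i • Di i) θ :=
    HasFDerivAt.fun_sum fun i _ => (hzi i).const_mul (q i)
  have hℓeq : (fun ψ => crossEntropy q (softmax (z ψ))) =
      fun ψ => Real.log (∑ j, Real.exp (z ψ j)) - ∑ i, q i * z ψ i := by
    funext ψ
    have hSψ := hS ψ
    simp only [crossEntropy, softmax]
    have hli : ∀ i : Fin K, Real.log (Real.exp (z ψ i) / ∑ j, Real.exp (z ψ j)) =
        z ψ i - Real.log (∑ j, Real.exp (z ψ j)) := fun i => by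
      rw [Real.log_div (Real.exp_ne_zero _) hSψ.ne', Real.log_exp]
    simp only [hli, mul_sub]
    rw [Finset.sum_sub_distrib, ← Finset.sum_mul, hq1]
    ring
  set p : Fin K → ℝ := softmax (z θ) with hp
  have hppos : ∀ i, 0 < p i := fun i => div_pos (Real.exp_pos _) (hS θ)
  have hpsum : ∑ i, p i = 1 := by
    simp only [hp, softmax]
    rw [← Finset.sum_div, div_self (hS θ).ne']
  set L : E →L[ℝ] ℝ := ∑ i, (p i - q i) • Di i with hL
  have hLder : HasFDerivAt (fun ψ => crossEntropy q (softmax (z ψ))) L θ := by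
    rw [hℓeq]
    have h := hlogS.sub hlin
    refine h.congr_fderiv ?_
    symm
    ext v
    simp only [hL, ContinuousLinearMap.sum_apply, ContinuousLinearMap.coe_smul',
      Pi.smul_apply, smul_eq_mul, ContinuousLinearMap.coe_sub', Pi.sub_apply,
      Finset.smul_sum]
    rw [← Finset.sum_sub_distrib]
    refine Finset.sum_congr rfl fun i _ => ?_
    simp only [hp, softmax, smul_eq_mul]
    field_simp
  refine ⟨hLder.differentiableAt, ?_⟩
  have hgrad : ‖gradient (fun ψ => crossEntropy q (softmax (z ψ))) θ‖ = ‖L‖ := by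
    unfold gradient
    rw [hLder.fderiv]
    exact LinearIsometryEquiv.norm_map _ _
  rw [hgrad]
  set w : EuclideanSpace ℝ (Fin K) := WithLp.toLp 2 (fun i => p i - q i : Fin K → ℝ) with hw
  have hLnorm : ‖L‖ ≤ ‖w‖ * M := by
    refine ContinuousLinearMap.opNorm_le_bound _ (by positivity) fun v => ?_
    have hLv : L v = ∑ i, (p i - q i) * (D v i) := by
      simp only [hL, ContinuousLinearMap.sum_apply, ContinuousLinearMap.coe_smul',
        Pi.smul_apply, smul_eq_mul, hDi, ContinuousLinearMap.coe_comp', Function.comp_apply]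
      rfl
    have hinner : (inner ℝ w (D v) : ℝ) = ∑ i, (p i - q i) * (D v i) := by
      simp [PiLp.inner_apply, RCLike.inner_apply, hw, mul_comm]
    have hcs : |L v| ≤ ‖w‖ * ‖D v‖ := by
      rw [hLv, ← hinner]
      exact abs_real_inner_le_norm w (D v)
    have hDv : ‖D v‖ ≤ M * ‖v‖ :=
      le_trans (D.le_opNorm v) (mul_le_mul_of_nonneg_right hDz (norm_nonneg v))
    calc ‖L v‖ = |L v| := rfl
      _ ≤ ‖w‖ * ‖D v‖ := hcs
      _ ≤ ‖w‖ * (M * ‖v‖) := mul_le_mul_of_nonneg_left hDv (norm_nonneg w)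
      _ = ‖w‖ * M * ‖v‖ := by ring
  have hw2 : ‖w‖ ≤ Real.sqrt (2 * crossEntropy q p) := by
    rw [EuclideanSpace.norm_eq]
    apply Real.sqrt_le_sqrt
    simp only [Real.norm_eq_abs, sq_abs]
    exact sum_sq_le_twoCE p q hppos hpsum hq0 hq1
  calc ‖L‖ ≤ ‖w‖ * M := hLnorm
    _ ≤ Real.sqrt (2 * crossEntropy q p) * M := mul_le_mul_of_nonneg_right hw2 hM
    _ = M * Real.sqrt (2 * crossEntropy q (softmax (z θ))) := by rw [mul_comm, hp]
end

section
/- Let E be a finite-dimensional real inner product space and K ≥ 1. Let T ≥ 1 and for each t ∈ Fin T let z_t : E → EuclideanSpace ℝ (Fin K) be differentiable at θ with ‖Dz_t(θ)‖ ≤ M, and let q_t be a probability vector on Fin K. Define the sequence loss ℓ(ψ) = (1/T)·∑_t CE(q_t‖softmax(z_t(ψ))). Then ℓ is differentiable at θ and ‖∇ℓ(θ)‖ ≤ M·√(2·ℓ(θ)). -/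
section aux
variable {K : ℕ}

variable {K : ℕ}

lemma sumexp_pos (hK : 1 ≤ K) (v : EuclideanSpace ℝ (Fin K)) :
    0 < ∑ j, Real.exp (v j) :=
  Finset.sum_pos (fun j _ => Real.exp_pos _) (by simpa [Finset.univ_nonempty_iff, ← Fin.pos_iff_nonempty] using (show 0 < K by omega))

lemma softmax_pos (hK : 1 ≤ K) (v : EuclideanSpace ℝ (Fin K)) (i : Fin K) :
    0 < softmax v i := div_pos (Real.exp_pos _) (sumexp_pos hK v)

lemma softmax_sum (hK : 1 ≤ K) (v : EuclideanSpace ℝ (Fin K)) :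
    ∑ i, softmax v i = 1 := by
  simp [softmax, ← Finset.sum_div, div_self (sumexp_pos hK v).ne']

lemma softmax_le_one (hK : 1 ≤ K) (v : EuclideanSpace ℝ (Fin K)) (i : Fin K) :
    softmax v i ≤ 1 := by
  rw [← softmax_sum hK v]
  exact Finset.single_le_sum (fun j _ => (softmax_pos hK v j).le) (Finset.mem_univ i)

lemma crossEntropy_nonneg (hK : 1 ≤ K) (q : Fin K → ℝ) (hq0 : ∀ i, 0 ≤ q i)
    (v : EuclideanSpace ℝ (Fin K)) : 0 ≤ crossEntropy q (softmax v) := by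
  rw [crossEntropy, neg_nonneg]
  refine Finset.sum_nonpos fun i _ => mul_nonpos_of_nonneg_of_nonpos (hq0 i) ?_
  exact Real.log_nonpos (softmax_pos hK v i).le (softmax_le_one hK v i)

/-- key numeric bound : `∑ (p-q)² ≤ 2·CE`. -/
lemma normsq_le (hK : 1 ≤ K) (q : Fin K → ℝ) (hq0 : ∀ i, 0 ≤ q i) (hq1 : ∑ i, q i = 1)
    (v : EuclideanSpace ℝ (Fin K)) :
    ∑ i, (softmax v i - q i) ^ 2 ≤ 2 * crossEntropy q (softmax v) := by
  set p := softmax v with hp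
  have hp0 : ∀ i, 0 < p i := softmax_pos hK v
  have hp1 : ∀ i, p i ≤ 1 := softmax_le_one hK v
  have hps : ∑ i, p i = 1 := softmax_sum hK v
  have hq0' : ∀ i, q i ≤ 1 := fun i => by
    rw [← hq1]; exact Finset.single_le_sum (fun j _ => hq0 j) (Finset.mem_univ i)
  have h1 : ∑ i, (p i - q i) ^ 2 ≤ 2 - 2 * ∑ i, p i * q i := by
    have : ∑ i, (p i - q i) ^ 2 = ∑ i, p i ^ 2 + ∑ i, q i ^ 2 - 2 * ∑ i, p i * q i := by
      rw [Finset.sum_congr rfl (fun i _ => by ring :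
        ∀ i ∈ Finset.univ, (p i - q i) ^ 2 = p i ^ 2 + q i ^ 2 - 2 * (p i * q i)),
        Finset.sum_sub_distrib, Finset.sum_add_distrib, ← Finset.mul_sum]
    rw [this]
    have hpsq : ∑ i, p i ^ 2 ≤ 1 := by
      calc ∑ i, p i ^ 2 ≤ ∑ i, p i :=
        Finset.sum_le_sum fun i _ => by nlinarith [hp0 i, hp1 i]
      _ = 1 := hps
    have hqsq : ∑ i, q i ^ 2 ≤ 1 := by
      calc ∑ i, q i ^ 2 ≤ ∑ i, q i :=
        Finset.sum_le_sum fun i _ => by nlinarith [hq0 i, hq0' i]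
      _ = 1 := hq1
    linarith
  have h2 : 1 - ∑ i, p i * q i ≤ crossEntropy q p := by
    rw [crossEntropy]
    have : ∀ i ∈ Finset.univ, q i * (1 - p i) ≤ q i * (- Real.log (p i)) := by
      intro i _
      apply mul_le_mul_of_nonneg_left _ (hq0 i)
      have := Real.log_le_sub_one_of_pos (hp0 i)
      linarith
    calc 1 - ∑ i, p i * q i = ∑ i, q i * (1 - p i) := by
          rw [Finset.sum_congr rfl (fun i _ => by ring :
            ∀ i ∈ Finset.univ, q i * (1 - p i) = q i - p i * q i),
            Finset.sum_sub_distrib, hq1]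
      _ ≤ ∑ i, q i * (- Real.log (p i)) := Finset.sum_le_sum this
      _ = -∑ i, q i * Real.log (p i) := by simp [mul_neg, Finset.sum_neg_distrib]
  linarith


end aux

noncomputable def glin {K : ℕ} (q : Fin K → ℝ) (v : EuclideanSpace ℝ (Fin K)) : ℝ :=
  Real.log (∑ j, Real.exp (v j)) - ∑ i, q i * v i

lemma crossEntropy_softmax_eq {K : ℕ} (hK : 1 ≤ K) (q : Fin K → ℝ) (hq1 : ∑ i, q i = 1)
    (v : EuclideanSpace ℝ (Fin K)) :
    crossEntropy q (softmax v) = glin q v := by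
  have hS := sumexp_pos hK v
  rw [crossEntropy, glin]
  have : ∀ i ∈ Finset.univ, q i * Real.log (softmax v i)
       = q i * v i - q i * Real.log (∑ j, Real.exp (v j)) := by
    intro i _
    rw [softmax, Real.log_div (Real.exp_pos _).ne' hS.ne', Real.log_exp]; ring
  rw [Finset.sum_congr rfl this, Finset.sum_sub_distrib, ← Finset.sum_mul, hq1]
  ring

lemma hasFDerivAt_proj {K : ℕ} (v : EuclideanSpace ℝ (Fin K)) (j : Fin K) :
    HasFDerivAt (fun v : EuclideanSpace ℝ (Fin K) => v j)
      (EuclideanSpace.proj j : EuclideanSpace ℝ (Fin K) →L[ℝ] ℝ) v := by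
  have hc : (fun v : EuclideanSpace ℝ (Fin K) => v j)
      = ⇑(EuclideanSpace.proj (𝕜 := ℝ) j) := by ext v; rfl
  rw [hc]; exact (EuclideanSpace.proj (𝕜 := ℝ) (ι := Fin K) j).hasFDerivAt

lemma hasFDerivAt_glin {K : ℕ} (hK : 1 ≤ K) (q : Fin K → ℝ) (v : EuclideanSpace ℝ (Fin K))
    (w : EuclideanSpace ℝ (Fin K)) (hw : ∀ i, w i = softmax v i - q i) :
    HasFDerivAt (glin q) (innerSL ℝ w) v := by
  have hS := sumexp_pos hK v
  have hsum : HasFDerivAt (fun v : EuclideanSpace ℝ (Fin K) => ∑ j, Real.exp (v j))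
      (∑ j, Real.exp (v j) • (EuclideanSpace.proj j : EuclideanSpace ℝ (Fin K) →L[ℝ] ℝ)) v :=
    HasFDerivAt.fun_sum fun j _ => (hasFDerivAt_proj v j).exp
  have h1 := hsum.log hS.ne'
  have h2 : HasFDerivAt (fun v : EuclideanSpace ℝ (Fin K) => ∑ i, q i * v i)
      (∑ i, q i • (EuclideanSpace.proj i : EuclideanSpace ℝ (Fin K) →L[ℝ] ℝ)) v :=
    HasFDerivAt.fun_sum fun i _ => (hasFDerivAt_proj v i).const_mul (q i)
  have h3 := h1.sub h2
  refine h3.congr_fderiv ?_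
  symm
  ext h
  simp only [innerSL_apply_apply, PiLp.inner_apply, RCLike.inner_apply, starRingEnd_apply, star_trivial,
    ContinuousLinearMap.sub_apply, ContinuousLinearMap.smul_apply, ContinuousLinearMap.coe_sum',
    Finset.sum_apply, PiLp.proj_apply, smul_eq_mul]
  rw [Finset.mul_sum, ← Finset.sum_sub_distrib]
  refine Finset.sum_congr rfl fun i _ => ?_
  rw [hw i, softmax]
  field_simp



/-- **Sequence-level gradient bound.** The token-averaged softmax cross-entropy loss
`ℓ(ψ) = (1/T)·∑_t CE(q_t ‖ softmax(z_t(ψ)))` is differentiable at `θ` and its gradient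
norm is bounded by `M·√(2·ℓ(θ))`. -/
theorem sequence_crossEntropy_gradient_bound
    {E : Type*} [NormedAddCommGroup E] [InnerProductSpace ℝ E] [FiniteDimensional ℝ E]
    {K : ℕ} (hK : 1 ≤ K)
    (T : ℕ) (hT : 1 ≤ T)
    (z : Fin T → E → EuclideanSpace ℝ (Fin K)) (θ : E) (M : ℝ) (hM : 0 ≤ M)
    (hz : ∀ t, DifferentiableAt ℝ (z t) θ) (hDz : ∀ t, ‖fderiv ℝ (z t) θ‖ ≤ M)
    (q : Fin T → Fin K → ℝ) (hq0 : ∀ t i, 0 ≤ q t i) (hq1 : ∀ t, ∑ i, q t i = 1)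
    (ℓ : E → ℝ)
    (hℓ : ℓ = fun ψ => (1 / (T : ℝ)) * ∑ t, crossEntropy (q t) (softmax (z t ψ))) :
    DifferentiableAt ℝ ℓ θ ∧
      ‖gradient ℓ θ‖ ≤ M * Real.sqrt (2 * ℓ θ) := by
  have hT0 : (0 : ℝ) < T := by exact_mod_cast hT
  -- per-token data
  set w : Fin T → EuclideanSpace ℝ (Fin K) :=
    fun t => WithLp.toLp 2 (fun i => softmax (z t θ) i - q t i : Fin K → ℝ) with hwdef
  set D : Fin T → E →L[ℝ] ℝ :=
    fun t => (innerSL ℝ (w t)).comp (fderiv ℝ (z t) θ) with hDdef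
  have hft : ∀ t, HasFDerivAt (fun ψ => crossEntropy (q t) (softmax (z t ψ))) (D t) θ := by
    intro t
    have hg : HasFDerivAt (glin (q t)) (innerSL ℝ (w t)) (z t θ) :=
      hasFDerivAt_glin hK (q t) (z t θ) (w t) (fun i => rfl)
    have hcomp := hg.comp θ (hz t).hasFDerivAt
    have heq : (fun ψ => crossEntropy (q t) (softmax (z t ψ)))
        = fun ψ => glin (q t) (z t ψ) :=
      funext fun ψ => crossEntropy_softmax_eq hK (q t) (hq1 t) (z t ψ)
    rw [heq]; exact hcomp
  have hL : HasFDerivAt ℓ ((1 / (T : ℝ)) • ∑ t, D t) θ := by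
    rw [hℓ]
    exact (HasFDerivAt.fun_sum fun t _ => hft t).const_mul (1 / (T : ℝ))
  refine ⟨hL.differentiableAt, ?_⟩
  -- gradient norm = fderiv norm
  have hgrad : ‖gradient ℓ θ‖ = ‖fderiv ℝ ℓ θ‖ := by
    rw [gradient, LinearIsometryEquiv.norm_map]
  rw [hgrad, hL.fderiv]
  -- per-token norm bound
  have hCE : ∀ t, 0 ≤ crossEntropy (q t) (softmax (z t θ)) :=
    fun t => crossEntropy_nonneg hK (q t) (hq0 t) (z t θ)
  have hwt : ∀ t, ‖w t‖ ≤ Real.sqrt (2 * crossEntropy (q t) (softmax (z t θ))) := by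
    intro t
    rw [EuclideanSpace.norm_eq]
    apply Real.sqrt_le_sqrt
    calc ∑ i, ‖w t i‖ ^ 2 = ∑ i, (softmax (z t θ) i - q t i) ^ 2 := by
          simp [hwdef, Real.norm_eq_abs, sq_abs]
      _ ≤ 2 * crossEntropy (q t) (softmax (z t θ)) :=
          normsq_le hK (q t) (hq0 t) (hq1 t) (z t θ)
  have hDt : ∀ t, ‖D t‖ ≤ M * Real.sqrt (2 * crossEntropy (q t) (softmax (z t θ))) := by
    intro t
    calc ‖D t‖ ≤ ‖innerSL ℝ (w t)‖ * ‖fderiv ℝ (z t) θ‖ := ContinuousLinearMap.opNorm_comp_le _ _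
      _ = ‖w t‖ * ‖fderiv ℝ (z t) θ‖ := by rw [innerSL_apply_norm]
      _ ≤ Real.sqrt (2 * crossEntropy (q t) (softmax (z t θ))) * M :=
          mul_le_mul (hwt t) (hDz t) (norm_nonneg _) (Real.sqrt_nonneg _)
      _ = M * Real.sqrt (2 * crossEntropy (q t) (softmax (z t θ))) := mul_comm _ _
  -- sum up
  set a : Fin T → ℝ := fun t => crossEntropy (q t) (softmax (z t θ)) with hadef
  have step1 : ‖(1 / (T : ℝ)) • ∑ t, D t‖ ≤ (1 / (T : ℝ)) * ∑ t, M * Real.sqrt (2 * a t) := by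
    calc ‖(1 / (T : ℝ)) • ∑ t, D t‖ ≤ ‖(1 / (T : ℝ))‖ * ‖∑ t, D t‖ := ContinuousLinearMap.opNorm_smul_le _ _
      _ = (1 / (T : ℝ)) * ‖∑ t, D t‖ := by
          rw [Real.norm_eq_abs, abs_of_pos (by positivity)]
      _ ≤ (1 / (T : ℝ)) * ∑ t, M * Real.sqrt (2 * a t) :=
          mul_le_mul_of_nonneg_left
            ((norm_sum_le _ _).trans (Finset.sum_le_sum fun t _ => hDt t)) (by positivity)
  refine step1.trans ?_
  -- Jensen via Cauchy–Schwarz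
  have key : (1 / (T : ℝ)) * ∑ t, Real.sqrt (2 * a t)
      ≤ Real.sqrt (2 * ((1 / (T : ℝ)) * ∑ t, a t)) := by
    have hs0 : 0 ≤ ∑ t, Real.sqrt (2 * a t) :=
      Finset.sum_nonneg fun t _ => Real.sqrt_nonneg _
    have hsa : 0 ≤ ∑ t, a t := Finset.sum_nonneg fun t _ => hCE t
    rw [Real.le_sqrt (by positivity) (by positivity)]
    have CS : (∑ t, Real.sqrt (2 * a t)) ^ 2 ≤ (T : ℝ) * ∑ t, (2 * a t) := by
      have CS0 := Finset.sum_mul_sq_le_sq_mul_sq Finset.univ (fun _ : Fin T => (1 : ℝ))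
        (fun t => Real.sqrt (2 * a t))
      simp only [one_mul, one_pow, mul_one, Finset.sum_const, Finset.card_univ,
        Fintype.card_fin, nsmul_eq_mul, smul_eq_mul] at CS0
      rw [Finset.sum_congr rfl
        (fun t _ => Real.sq_sqrt (mul_nonneg (by norm_num : (0:ℝ) ≤ 2) (hCE t)))] at CS0
      exact CS0
    have : ((1 / (T : ℝ)) * ∑ t, Real.sqrt (2 * a t)) ^ 2
        = (1 / (T : ℝ)) ^ 2 * (∑ t, Real.sqrt (2 * a t)) ^ 2 := by ring
    rw [this]
    calc (1 / (T : ℝ)) ^ 2 * (∑ t, Real.sqrt (2 * a t)) ^ 2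
        ≤ (1 / (T : ℝ)) ^ 2 * ((T : ℝ) * ∑ t, (2 * a t)) :=
          mul_le_mul_of_nonneg_left CS (by positivity)
      _ = 2 * ((1 / (T : ℝ)) * ∑ t, a t) := by
          rw [Finset.mul_sum]
          field_simp
          ring_nf
          rw [← Finset.sum_mul, ← Finset.mul_sum]
  calc (1 / (T : ℝ)) * ∑ t, M * Real.sqrt (2 * a t)
      = M * ((1 / (T : ℝ)) * ∑ t, Real.sqrt (2 * a t)) := by
        rw [← Finset.mul_sum]; ring
    _ ≤ M * Real.sqrt (2 * ((1 / (T : ℝ)) * ∑ t, a t)) :=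
        mul_le_mul_of_nonneg_left key hM
    _ = M * Real.sqrt (2 * ℓ θ) := by rw [hℓ]
end
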